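/- Let ⟨g_m⟩_{m∈ℤ} be the G-sequence of a homomorphism h : π₁(S,s₀) → G for Chamanara's surface, i.e., g_m = h ∘ φ_δ^{-m}(γ_1). Then for all k, n ∈ ℤ: h ∘ φ_δ^{-k}(γ_n) equals g_{k+n−1} g_{k+n}^{-1} g_{k+n+1}^{-1} ⋯ g_{k−1}^{-1} if n < 0; equals g_{k−1} if n = 0; equals g_k if n = 1; and equals g_k^{-1} g_{k+1}^{-1} ⋯ g_{k+n−2}^{-1} g_{k+n−1} if n > 1. -/

import Mathlib

private lemma stmt9.listconv {G : Type} [Group G] (F : ℤ → G) (m : ℕ) :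
    (List.map F (do let a ← List.range m; pure ((a:ℕ) : ℤ))).prod
    = ((List.range m).map (fun i : ℕ => F (i:ℤ))).prod := by
  show (List.map _ (List.flatMap (fun a : ℕ => [(↑a:ℤ)]) (List.range m))).prod = _
  rw [← List.map_eq_flatMap, List.map_map]
  rfl

/-- Let `π₁(S,s₀)` be the free group on generators `{γ_n : n ∈ ℤ}` and `φ_δ` the
automorphism with `φ_δ⁻¹(γ_n) = γ_{n+1} γ₁⁻¹` for `n < 0`, `φ_δ⁻¹(γ₀) = γ₁`, and
`φ_δ⁻¹(γ_n) = γ₁ γ_{n+1}` for `n > 0`. For a homomorphism `h : π₁(S,s₀) → G`, let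
`g_m = h(φ_δ^{-m}(γ₁))` be its `G`-sequence. Then for all `k, n ∈ ℤ`:
`h(φ_δ^{-k}(γ_n))` equals `g_{k+n-1} g_{k+n}⁻¹ g_{k+n+1}⁻¹ ⋯ g_{k-1}⁻¹` if `n < 0`,
equals `g_{k-1}` if `n = 0`, equals `g_k` if `n = 1`, and equals
`g_k⁻¹ g_{k+1}⁻¹ ⋯ g_{k+n-2}⁻¹ g_{k+n-1}` if `n > 1`. -/
theorem stmt9 {G : Type} [Group G] (φ : MulAut (FreeGroup ℤ))
    (hφ : ∀ n : ℤ, φ⁻¹ (FreeGroup.of n) =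
      if n < 0 then FreeGroup.of (n + 1) * (FreeGroup.of (1 : ℤ))⁻¹
      else if n = 0 then FreeGroup.of (1 : ℤ)
      else FreeGroup.of (1 : ℤ) * FreeGroup.of (n + 1))
    (h : FreeGroup ℤ →* G)
    (g : ℤ → G) (hg : ∀ m : ℤ, g m = h ((φ ^ (-m)) (FreeGroup.of (1 : ℤ)))) :
    ∀ k n : ℤ, h ((φ ^ (-k)) (FreeGroup.of n)) =
      if n < 0 then
        g (k + n - 1) * ((List.range (-n).toNat).map (fun i => (g (k + n + i))⁻¹)).prod
      else if n = 0 then g (k - 1)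
      else if n = 1 then g k
      else ((List.range (n - 1).toNat).map (fun i => (g (k + i))⁻¹)).prod * g (k + n - 1) := by
  have hstep : ∀ (k : ℤ) (x : FreeGroup ℤ), (φ ^ (-(k+1))) x = (φ ^ (-k)) (φ⁻¹ x) := by
    intro k x
    have e : (-(k+1) : ℤ) = -k + (-1) := by ring
    rw [e, zpow_add, zpow_neg_one, MulAut.mul_apply]
  have hA1 : ∀ k : ℤ, h ((φ ^ (-k)) (FreeGroup.of (1 : ℤ))) = g k := fun k => (hg k).symm
  -- positive case
  have hpos : ∀ n : ℤ, 1 ≤ n → ∀ k : ℤ, h ((φ ^ (-k)) (FreeGroup.of n)) =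
      ((List.range (n - 1).toNat).map (fun i : ℕ => (g (k + (i:ℤ)))⁻¹)).prod * g (k + n - 1) := by
    intro n hn
    refine Int.le_induction (motive := fun n _ => ∀ k : ℤ, h ((φ ^ (-k)) (FreeGroup.of n)) =
      ((List.range (n - 1).toNat).map (fun i : ℕ => (g (k + (i:ℤ)))⁻¹)).prod * g (k + n - 1))
      ?_ ?_ n hn
    · intro k
      rw [show ((1:ℤ)-1).toNat = 0 from rfl, List.range_zero, List.map_nil, List.prod_nil,
        one_mul, show k + 1 - 1 = k by ring]
      exact hA1 k
    · intro n hn IH k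
      have hrec : h ((φ ^ (-k)) (FreeGroup.of (n+1))) =
          (g k)⁻¹ * h ((φ ^ (-(k+1))) (FreeGroup.of n)) := by
        rw [hstep k (FreeGroup.of n), hφ n, if_neg (by omega), if_neg (by omega)]
        simp only [map_mul]
        rw [hA1 k]
        group
      rw [hrec, IH (k+1)]
      have ht : ((n+1) - 1).toNat = (n - 1).toNat + 1 := by omega
      rw [ht, List.range_succ_eq_map, List.map_cons, List.prod_cons, List.map_map]
      have hf : ((fun i : ℕ => (g (k + (i:ℤ)))⁻¹) ∘ Nat.succ)
          = (fun i : ℕ => (g (k + 1 + (i:ℤ)))⁻¹) := by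
        funext i
        simp only [Function.comp_apply]
        congr 2
        push_cast
        ring
      rw [hf]
      have harg : (k : ℤ) + 1 + n - 1 = k + (n + 1) - 1 := by ring
      rw [harg]
      push_cast
      group
  -- nonpositive case
  have hneg : ∀ n : ℤ, n ≤ 0 → ∀ k : ℤ, h ((φ ^ (-k)) (FreeGroup.of n)) =
      g (k + n - 1) * ((List.range (-n).toNat).map (fun i : ℕ => (g (k + n + (i:ℤ)))⁻¹)).prod := by
    intro n hn
    refine Int.le_induction_down (motive := fun n _ => ∀ k : ℤ, h ((φ ^ (-k)) (FreeGroup.of n)) =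
      g (k + n - 1) * ((List.range (-n).toNat).map (fun i : ℕ => (g (k + n + (i:ℤ)))⁻¹)).prod)
      ?_ ?_ n hn
    · intro k
      have e : (-k : ℤ) = -((k-1)+1) := by ring
      rw [e, hstep (k-1) (FreeGroup.of 0), hφ 0, if_neg (by omega), if_pos rfl, hA1 (k-1)]
      simp
    · intro n hn IH k
      have e : (-k : ℤ) = -((k-1)+1) := by ring
      rw [e, hstep (k-1) (FreeGroup.of (n-1)), hφ (n-1), if_pos (by omega)]
      simp only [map_mul, map_inv]
      have hn1 : (n - 1) + 1 = n := by ring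
      rw [hn1, IH (k-1), hA1 (k-1)]
      have ht : (-(n-1)).toNat = (-n).toNat + 1 := by omega
      rw [ht, List.range_succ, List.map_append, List.prod_append]
      have hargs : (fun i : ℕ => (g (k + (n-1) + (i:ℤ)))⁻¹)
          = fun i : ℕ => (g (k - 1 + n + (i:ℤ)))⁻¹ := by
        funext i; congr 2; ring
      have hhead : k + (n - 1) - 1 = k - 1 + n - 1 := by ring
      have hfin : k - 1 + n + (((-n).toNat : ℕ) : ℤ) = k - 1 := by omega
      rw [hargs, hhead]
      simp only [List.map_cons, List.map_nil, List.prod_cons, List.prod_nil, mul_one]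
      rw [hfin, mul_assoc]
  intro k n
  split_ifs with h1 h2 h3
  · rw [stmt9.listconv]
    exact hneg n (le_of_lt h1) k
  · subst h2
    simpa using hneg 0 le_rfl k
  · subst h3
    simpa using hpos 1 le_rfl k
  · rw [stmt9.listconv]
    exact hpos n (by omega) k
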